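/- arXiv:1411.5299 — 2 statements merged into one kernel-verified Lean document; each statement's English description precedes it below -/
import Mathlib

section
/- Let ε₁, ε₂ ∈ [0, 1/2) and suppose (1 − H(ε₁))/2 ≥ 1 − H(ε₂). Then the maximum over p ∈ [0,1] of min( (1 − H(ε₁))·(1 − p) , H(ε₂·(1 − 2p) + p) − H(ε₂) ) equals 1 − H(ε₂), and is attained at p = 1/2. Here H denotes the binary entropy function H(x) = −x·log₂(x) − (1 − x)·log₂(1 − x) for x ∈ [0,1], with the convention 0·log₂0 = 0. -/
/-- The binary entropy function `H(x) = −x·log₂ x − (1 − x)·log₂(1 − x)`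
(with the convention `0·log₂ 0 = 0`, automatic since `Real.logb 2 0 = 0`). -/
noncomputable def binEnt (x : ℝ) : ℝ :=
  -(x * Real.logb 2 x) - (1 - x) * Real.logb 2 (1 - x)

lemma binEnt_eq (x : ℝ) : binEnt x = Real.binEntropy x / Real.log 2 := by
  simp [binEnt, Real.binEntropy, Real.logb, Real.log_inv]
  ring

lemma binEnt_le_one (x : ℝ) : binEnt x ≤ 1 := by
  rw [binEnt_eq, div_le_one (Real.log_pos (by norm_num))]
  exact Real.binEntropy_le_log_two

lemma binEnt_half : binEnt (1 / 2) = 1 := by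
  rw [binEnt_eq, show (1:ℝ)/2 = 2⁻¹ by norm_num, Real.binEntropy_two_inv,
    div_self (Real.log_ne_zero_of_pos_of_ne_one (by norm_num) (by norm_num))]

/-- Second case of Corollary 1: for BSC links with crossover probabilities
`ε₁, ε₂ ∈ [0,1/2)`, if `(1 − H(ε₁))/2 ≥ 1 − H(ε₂)`, then the maximum over `p ∈ [0,1]`
of `min((1 − H(ε₁))·(1 − p), H(ε₂·(1 − 2p) + p) − H(ε₂))` equals `1 − H(ε₂)`,
attained at `p = 1/2`. -/
theorem stmt_9 (ε₁ ε₂ : ℝ) (hε₁ : ε₁ ∈ Set.Ico (0 : ℝ) (1 / 2))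
    (hε₂ : ε₂ ∈ Set.Ico (0 : ℝ) (1 / 2))
    (hcond : (1 - binEnt ε₁) / 2 ≥ 1 - binEnt ε₂) :
    (∀ p ∈ Set.Icc (0 : ℝ) 1,
        min ((1 - binEnt ε₁) * (1 - p)) (binEnt (ε₂ * (1 - 2 * p) + p) - binEnt ε₂) ≤
          1 - binEnt ε₂) ∧
      min ((1 - binEnt ε₁) * (1 - (1 / 2 : ℝ)))
          (binEnt (ε₂ * (1 - 2 * (1 / 2 : ℝ)) + 1 / 2) - binEnt ε₂) =
        1 - binEnt ε₂ := by
  constructor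
  · intro p _
    exact le_trans (min_le_right _ _) (by linarith [binEnt_le_one (ε₂ * (1 - 2 * p) + p)])
  · have h : ε₂ * (1 - 2 * (1 / 2 : ℝ)) + 1 / 2 = 1 / 2 := by ring
    rw [h, binEnt_half]
    exact min_eq_right (by linarith)
end

section
/- Let ε ∈ [0, 1/2). Then the supremum over p ∈ [0,1] of min( (1 − H(ε))·(1 − p) , H(ε·(1 − 2p) + p) − H(ε) ) is strictly greater than (1 − H(ε))/2. Here H denotes the binary entropy function H(x) = −x·log₂(x) − (1 − x)·log₂(1 − x) for x ∈ [0,1], with the convention 0·log₂0 = 0. -/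
lemma binEnt_continuous : Continuous binEnt := by
  simp only [funext binEnt_eq]
  exact Real.binEntropy_continuous.div_const _

lemma binEnt_lt_one {x : ℝ} (hx : x ≠ 2⁻¹) : binEnt x < 1 := by
  rw [binEnt_eq, div_lt_one (Real.log_pos (by norm_num))]
  exact Real.binEntropy_lt_log_two.2 hx

/-- For symmetric BSC links with crossover probability `ε < 1/2`, the capacity of the
two-hop half-duplex relay channel (the max–min over the relay transmit probability)
is strictly larger than the conventional relaying rate `(1 − H(ε))/2`. -/
theorem stmt_12 (ε : ℝ) (hε : ε ∈ Set.Ico (0 : ℝ) (1 / 2)) :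
    (1 - binEnt ε) / 2 <
      ⨆ p : Set.Icc (0 : ℝ) 1,
        min ((1 - binEnt ε) * (1 - (p : ℝ)))
          (binEnt (ε * (1 - 2 * (p : ℝ)) + (p : ℝ)) - binEnt ε) := by
  obtain ⟨hε0, hε2⟩ := hε
  have hH1 : binEnt ε < 1 := binEnt_lt_one (by rw [← one_div]; exact hε2.ne)
  have hpos : 0 < 1 - binEnt ε := by linarith
  -- boundedness of the range
  have hbdd : BddAbove (Set.range fun p : Set.Icc (0 : ℝ) 1 =>
      min ((1 - binEnt ε) * (1 - (p : ℝ)))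
        (binEnt (ε * (1 - 2 * (p : ℝ)) + (p : ℝ)) - binEnt ε)) := by
    refine ⟨1 - binEnt ε, ?_⟩
    rintro x ⟨⟨p, hp0, hp1⟩, rfl⟩
    refine (min_le_left _ _).trans ?_
    calc (1 - binEnt ε) * (1 - p) ≤ (1 - binEnt ε) * 1 := by
          apply mul_le_mul_of_nonneg_left (by linarith) hpos.le
      _ = 1 - binEnt ε := mul_one _
  -- the second component, as a function of p
  set g : ℝ → ℝ := fun p => binEnt (ε * (1 - 2 * p) + p) - binEnt ε with hg
  have hgc : Continuous g := by
    apply Continuous.sub _ continuous_const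
    exact binEnt_continuous.comp (by continuity)
  have hghalf : g (1 / 2) = 1 - binEnt ε := by
    simp only [hg]
    norm_num [binEnt_half]
  have htend : Filter.Tendsto g (nhdsWithin (1 / 2 : ℝ) (Set.Iio (1 / 2))) (nhds (1 - binEnt ε)) := by
    rw [← hghalf]
    exact (hgc.continuousAt.tendsto).mono_left nhdsWithin_le_nhds
  have E1 : ∀ᶠ p in nhdsWithin (1 / 2 : ℝ) (Set.Iio (1 / 2)),
      (1 - binEnt ε) / 2 < g p :=
    htend.eventually_const_lt (by linarith)
  have E2 : ∀ᶠ p in nhdsWithin (1 / 2 : ℝ) (Set.Iio (1 / 2)),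
      p ∈ Set.Ioo (0 : ℝ) (1 / 2) :=
    Ioo_mem_nhdsLT_of_mem ⟨by norm_num, le_refl _⟩
  obtain ⟨p, hp1, hp2⟩ := (E1.and E2).exists
  have hpIcc : p ∈ Set.Icc (0 : ℝ) 1 := ⟨hp2.1.le, by linarith [hp2.2]⟩
  have hfirst : (1 - binEnt ε) / 2 < (1 - binEnt ε) * (1 - p) := by
    have : (1 - binEnt ε) * (1 / 2) < (1 - binEnt ε) * (1 - p) :=
      mul_lt_mul_of_pos_left (by linarith [hp2.2]) hpos
    linarith
  refine lt_of_lt_of_le ?_ (le_ciSup hbdd ⟨p, hpIcc⟩)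
  exact lt_min hfirst hp1
end
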